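/- arXiv:0704.0112 — 3 statements merged into one kernel-verified Lean document; each statement's English description precedes it below -/
import Mathlib

section
/- For every natural number n ≥ 2, the number of XOR-triples contained in {1, 2, …, 2^n − 1} is exactly (2^n − 1)(2^n − 2)/6. -/
/-- An XOR-triple is a 3-element set of positive natural numbers `{a, b, c}`
with `a ^^^ b = c`; this condition is symmetric in `a`, `b`, `c`. -/
def IsXorTriple (t : Finset ℕ) : Prop :=
  t.card = 3 ∧ (∀ x ∈ t, 0 < x) ∧ ∃ a ∈ t, ∃ b ∈ t, a ≠ b ∧ a ^^^ b ∈ t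

instance : DecidablePred IsXorTriple := fun t => by
  unfold IsXorTriple; infer_instance

open Finset

/-- xor of all elements of a finset -/
instance xorComm : Std.Commutative (α := ℕ) (· ^^^ ·) := ⟨Nat.xor_comm⟩
instance xorAssoc : Std.Associative (α := ℕ) (· ^^^ ·) := ⟨Nat.xor_assoc⟩

def xorFold (p : Finset ℕ) : ℕ := Finset.fold (· ^^^ ·) 0 id p

lemma xorFold_pair {a b : ℕ} (h : a ≠ b) : xorFold {a, b} = a ^^^ b := by
  rw [xorFold, show ({a, b} : Finset ℕ) = insert a {b} from rfl,
    Finset.fold_insert (by simp [h]), Finset.fold_singleton]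
  simp

lemma xor_left_comm (a b c : ℕ) : a ^^^ (b ^^^ c) = b ^^^ (a ^^^ c) := by
  rw [← Nat.xor_assoc, Nat.xor_comm a b, Nat.xor_assoc]

lemma xor_ne_left' {a b : ℕ} (hb : b ≠ 0) : a ^^^ b ≠ a := by
  intro h
  apply hb
  have : a ^^^ (a ^^^ b) = a ^^^ a := congrArg (a ^^^ ·) h
  simpa [Nat.xor_xor_cancel_left, Nat.xor_self] using this

lemma triple_struct {t : Finset ℕ} (h : IsXorTriple t) :
    ∃ a b, a ≠ 0 ∧ b ≠ 0 ∧ a ≠ b ∧ t = {a, b, a ^^^ b} := by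
  obtain ⟨hcard, hpos, a, ha, b, hb, hab, hc⟩ := h
  have ha0 : a ≠ 0 := (hpos a ha).ne'
  have hb0 : b ≠ 0 := (hpos b hb).ne'
  refine ⟨a, b, ha0, hb0, hab, ?_⟩
  have hca : a ^^^ b ≠ a := xor_ne_left' hb0
  have hcb : a ^^^ b ≠ b := by
    rw [Nat.xor_comm]; exact xor_ne_left' ha0
  have hsub : ({a, b, a ^^^ b} : Finset ℕ) ⊆ t := by
    intro x hx
    simp only [mem_insert, mem_singleton] at hx
    rcases hx with rfl | rfl | rfl <;> assumption
  have hcard3 : ({a, b, a ^^^ b} : Finset ℕ).card = 3 := by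
    rw [card_insert_of_notMem (by simp [hab, hca.symm]),
        card_insert_of_notMem (by simp [hcb.symm])]
    simp
  exact ((eq_of_subset_of_card_le hsub (by rw [hcard, hcard3])).symm)

theorem xor_triple_count (n : ℕ) (hn : 2 ≤ n) :
    ((Finset.Icc 1 (2 ^ n - 1)).powerset.filter IsXorTriple).card
      = (2 ^ n - 1) * (2 ^ n - 2) / 6 := by
  classical
  set M := 2 ^ n - 1 with hM
  have h2n : 1 ≤ 2 ^ n := Nat.one_le_two_pow
  set T := ((Finset.Icc 1 M).powerset.filter IsXorTriple) with hT
  set P := (Finset.Icc 1 M).powersetCard 2 with hP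
  have hmap : ∀ p ∈ P, insert (xorFold p) p ∈ T := by
    intro p hp
    rw [hP, mem_powersetCard] at hp
    obtain ⟨hsub, hcard⟩ := hp
    obtain ⟨a, b, hab, rfl⟩ := Finset.card_eq_two.mp hcard
    have ha : a ∈ Finset.Icc 1 M := hsub (by simp)
    have hb : b ∈ Finset.Icc 1 M := hsub (by simp)
    rw [mem_Icc] at ha hb
    have ha0 : a ≠ 0 := by omega
    have hb0 : b ≠ 0 := by omega
    have hca : a ^^^ b ≠ a := xor_ne_left' hb0
    have hcb : a ^^^ b ≠ b := by rw [Nat.xor_comm]; exact xor_ne_left' ha0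
    have hc0 : a ^^^ b ≠ 0 := fun h => hab (Nat.eq_of_xor_eq_zero h)
    have hclt : a ^^^ b < 2 ^ n :=
      Nat.xor_lt_two_pow (by omega) (by omega)
    rw [xorFold_pair hab]
    rw [hT, mem_filter, mem_powerset]
    refine ⟨?_, ?_, ?_, a, by simp, b, by simp, hab, by simp⟩
    · intro x hx
      simp only [mem_insert, mem_singleton] at hx
      rcases hx with rfl | rfl | rfl
      · rw [mem_Icc]; omega
      · rw [mem_Icc]; omega
      · rw [mem_Icc]; omega
    · rw [card_insert_of_notMem (by simp [hca, hcb]),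
          card_insert_of_notMem (by simp [hab])]
      simp
    · intro x hx
      simp only [mem_insert, mem_singleton] at hx
      rcases hx with rfl | rfl | rfl <;> omega
  have hfiber : ∀ t ∈ T, (P.filter fun p => insert (xorFold p) p = t).card = 3 := by
    intro t ht
    rw [hT, mem_filter] at ht
    obtain ⟨htsub, htrip⟩ := ht
    rw [mem_powerset] at htsub
    obtain ⟨a, b, ha0, hb0, hab, rfl⟩ := triple_struct htrip
    have hca : a ^^^ b ≠ a := xor_ne_left' hb0
    have hcb : a ^^^ b ≠ b := by rw [Nat.xor_comm]; exact xor_ne_left' ha0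
    have heq : (P.filter fun p => insert (xorFold p) p = {a, b, a ^^^ b})
        = ({a, b, a ^^^ b} : Finset ℕ).powersetCard 2 := by
      ext p
      simp only [hP, mem_filter, mem_powersetCard]
      constructor
      · rintro ⟨⟨_, hc2⟩, hins⟩
        exact ⟨hins ▸ subset_insert _ p, hc2⟩
      · rintro ⟨hpsub, hc2⟩
        obtain ⟨x, y, hxy, rfl⟩ := Finset.card_eq_two.mp hc2
        have hx := hpsub (by simp : x ∈ ({x, y} : Finset ℕ))
        have hy := hpsub (by simp : y ∈ ({x, y} : Finset ℕ))
        refine ⟨⟨hpsub.trans htsub, hc2⟩, ?_⟩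
        rw [xorFold_pair hxy]
        simp only [mem_insert, mem_singleton] at hx hy
        rcases hx with rfl | rfl | rfl <;> rcases hy with rfl | rfl | rfl <;>
          first
          | exact absurd rfl hxy
          | (ext z
             simp only [mem_insert, mem_singleton]
             constructor <;> rintro (rfl | rfl | rfl) <;>
               first
               | tauto
               | simp [Nat.xor_comm, Nat.xor_assoc, xor_left_comm,
                   Nat.xor_xor_cancel_left, Nat.xor_xor_cancel_right, Nat.xor_self,
                   Nat.xor_zero, Nat.zero_xor])
    rw [heq, card_powersetCard]
    have : ({a, b, a ^^^ b} : Finset ℕ).card = 3 := htrip.1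
    rw [this]
    decide
  have hPcard : P.card = M.choose 2 := by
    rw [hP, card_powersetCard, Nat.card_Icc]
    congr 1
  have hsum : P.card = ∑ t ∈ T, 3 := by
    rw [card_eq_sum_card_fiberwise hmap]
    exact Finset.sum_congr rfl hfiber
  have h3T : 3 * T.card = M.choose 2 := by
    rw [← hPcard, hsum, Finset.sum_const, smul_eq_mul, mul_comm]
  have hM1 : M - 1 = 2 ^ n - 2 := by omega
  have : T.card = M.choose 2 / 3 := by omega
  rw [this, Nat.choose_two_right, hM1, Nat.div_div_eq_div_mul]
end

section
/- For every natural number n ≥ 2 and every S with 1 ≤ S ≤ 2^n − 1, the number of XOR-triples contained in {1, 2, …, 2^n − 1} that contain S is exactly 2^{n−1} − 1. -/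
private lemma xor_ne_self {a S : ℕ} (hS : S ≠ 0) : a ^^^ S ≠ a := by
  intro h
  apply hS
  have := congrArg (fun x => x ^^^ a) h
  simpa [Nat.xor_comm, xor_cancel_left] using this

theorem xor_triples_through_S (n S : ℕ) (hn : 2 ≤ n) (hS1 : 1 ≤ S) (hS : S ≤ 2 ^ n - 1) :
    ((Finset.Icc 1 (2 ^ n - 1)).powerset.filter (fun t => IsXorTriple t ∧ S ∈ t)).card
      = 2 ^ (n - 1) - 1 := by
  classical
  set N := 2 ^ n - 1 with hN
  have hpow : 1 ≤ 2 ^ n := Nat.one_le_two_pow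
  have hmem_iff : ∀ a : ℕ, a ∈ Finset.Icc 1 N ↔ 1 ≤ a ∧ a < 2 ^ n := by
    intro a; rw [Finset.mem_Icc]; omega
  have hSne : S ≠ 0 := by omega
  have hxor_mem : ∀ a ∈ Finset.Icc 1 N, a ≠ S → a ^^^ S ∈ Finset.Icc 1 N := by
    intro a ha hne
    rw [hmem_iff] at ha ⊢
    constructor
    · have : a ^^^ S ≠ 0 := fun h => hne (xor_eq_zero_iff.mp h)
      omega
    · exact Nat.xor_lt_two_pow ha.2 (by omega)
  set A := (Finset.Icc 1 N).erase S with hA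
  set X := A.filter (fun b => b < b ^^^ S) with hX
  set Y := A.filter (fun b => b ^^^ S < b) with hY
  have hSmem : S ∈ Finset.Icc 1 N := Finset.mem_Icc.mpr ⟨hS1, hS⟩
  -- card X = card Y
  have hXY : X.card = Y.card := by
    apply Finset.card_bij (fun b _ => b ^^^ S)
    · intro a ha
      rw [hX, Finset.mem_filter, hA, Finset.mem_erase] at ha
      rw [hY, Finset.mem_filter, hA, Finset.mem_erase]
      have hmem := hxor_mem a ha.1.2 ha.1.1
      refine ⟨⟨?_, hmem⟩, ?_⟩
      · intro h
        have ha0 : a = 0 := by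
          have := congrArg (fun x => x ^^^ S) h
          simpa [xor_cancel_right] using this
        have := (hmem_iff a).mp ha.1.2
        omega
      · simpa [xor_cancel_right] using ha.2
    · intro a ha b hb h
      have := congrArg (fun x => x ^^^ S) h
      simpa [xor_cancel_right] using this
    · intro b hb
      rw [hY, Finset.mem_filter, hA, Finset.mem_erase] at hb
      refine ⟨b ^^^ S, ?_, by simp [xor_cancel_right]⟩
      rw [hX, Finset.mem_filter, hA, Finset.mem_erase]
      have hmem := hxor_mem b hb.1.2 hb.1.1
      refine ⟨⟨?_, hmem⟩, ?_⟩
      · intro h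
        have hb0 : b = 0 := by
          have := congrArg (fun x => x ^^^ S) h
          simpa [xor_cancel_right] using this
        have := (hmem_iff b).mp hb.1.2
        omega
      · simpa [xor_cancel_right] using hb.2
  have hdisj : Disjoint X Y := by
    rw [Finset.disjoint_left]
    intro a ha hb
    rw [hX, Finset.mem_filter] at ha
    rw [hY, Finset.mem_filter] at hb
    omega
  have hunion : X ∪ Y = A := by
    ext a
    simp only [hX, hY, Finset.mem_union, Finset.mem_filter]
    constructor
    · rintro (h | h) <;> exact h.1
    · intro h
      have : a ^^^ S ≠ a := xor_ne_self hSne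
      rcases Nat.lt_or_ge a (a ^^^ S) with h' | h'
      · exact Or.inl ⟨h, h'⟩
      · exact Or.inr ⟨h, by omega⟩
  have hcardA : A.card = 2 ^ n - 2 := by
    rw [hA, Finset.card_erase_of_mem hSmem, Nat.card_Icc]
    omega
  have hcardX : X.card = 2 ^ (n - 1) - 1 := by
    have h2 : X.card + Y.card = 2 ^ n - 2 := by
      rw [← Finset.card_union_of_disjoint hdisj, hunion, hcardA]
    have hpow2 : 2 ^ n = 2 * 2 ^ (n - 1) := by
      conv_lhs => rw [show n = (n - 1) + 1 by omega]
      rw [pow_succ]; ring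
    have hpow3 : 1 ≤ 2 ^ (n - 1) := Nat.one_le_two_pow
    omega
  rw [← hcardX]
  symm
  -- bijection from X to the set of triples through S
  apply Finset.card_bij (fun b _ => ({S, b, b ^^^ S} : Finset ℕ))
  · intro b hb
    rw [hX, Finset.mem_filter, hA, Finset.mem_erase] at hb
    obtain ⟨⟨hbS, hbI⟩, hlt⟩ := hb
    have hx : b ^^^ S ∈ Finset.Icc 1 N := hxor_mem b hbI hbS
    have h1 : b ≠ S := hbS
    have h2 : b ^^^ S ≠ S := by
      intro h
      have hb0 : b = 0 := by
        have := congrArg (fun x => x ^^^ S) h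
        simpa [xor_cancel_right] using this
      have := (hmem_iff b).mp hbI
      omega
    have h3 : b ^^^ S ≠ b := xor_ne_self hSne
    rw [Finset.mem_filter, Finset.mem_powerset]
    refine ⟨?_, ⟨?_, ?_, ?_⟩, by simp⟩
    · intro x hx'
      simp only [Finset.mem_insert, Finset.mem_singleton] at hx'
      rcases hx' with rfl | rfl | rfl
      · exact hSmem
      · exact hbI
      · exact hx
    · rw [Finset.card_insert_of_notMem (by simp [Ne.symm h1, Ne.symm h2]),
        Finset.card_insert_of_notMem (by simp [Ne.symm h3]), Finset.card_singleton]
    · intro x hx'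
      simp only [Finset.mem_insert, Finset.mem_singleton] at hx'
      have := hmem_iff
      rcases hx' with rfl | rfl | rfl
      · omega
      · rw [hmem_iff] at hbI; omega
      · rw [hmem_iff] at hx; omega
    · refine ⟨S, by simp, b, by simp, Ne.symm h1, ?_⟩
      simp only [Finset.mem_insert, Finset.mem_singleton]
      right; right
      rw [Nat.xor_comm]
  · -- injectivity
    intro a ha b hb h
    rw [hX, Finset.mem_filter, hA, Finset.mem_erase] at ha hb
    have haS : a ≠ S := ha.1.1
    have hbS : b ≠ S := hb.1.1
    have hmema : a ∈ ({S, b, b ^^^ S} : Finset ℕ) := by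
      rw [← h]; simp
    simp only [Finset.mem_insert, Finset.mem_singleton] at hmema
    rcases hmema with h' | h' | h'
    · exact absurd h' haS
    · exact h'
    · -- a = b ^^^ S, then a ^^^ S = b, contradiction with orderings
      exfalso
      have hab : a ^^^ S = b := by
        rw [h', xor_cancel_right]
      have := ha.2
      have := hb.2
      omega
  · -- surjectivity
    intro t ht
    rw [Finset.mem_filter, Finset.mem_powerset] at ht
    obtain ⟨hsub, ⟨hcard, hpos, a, hat, c, hct, hac, hd⟩, hSt⟩ := ht
    set d := a ^^^ c with hdd
    have ha0 : a ≠ 0 := by have := hpos a hat; omega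
    have hc0 : c ≠ 0 := by have := hpos c hct; omega
    have hda : d ≠ a := by
      intro h
      apply hc0
      have h2 : a ^^^ c = a := by rw [← hdd]; exact h
      have := congrArg (fun x => a ^^^ x) h2
      simpa [xor_cancel_left, Nat.xor_self] using this
    have hdc : d ≠ c := by
      intro h
      apply ha0
      have h2 : a ^^^ c = c := by rw [← hdd]; exact h
      have := congrArg (fun x => x ^^^ c) h2
      simpa [xor_cancel_right, Nat.xor_self] using this
    have hteq : t = {a, c, d} := by
      symm
      apply Finset.eq_of_subset_of_card_le
      · intro x hx
        simp only [Finset.mem_insert, Finset.mem_singleton] at hx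
        rcases hx with rfl | rfl | rfl
        · exact hat
        · exact hct
        · exact hd
      · rw [hcard,
          Finset.card_insert_of_notMem (by simp [hac, Ne.symm hda]),
          Finset.card_insert_of_notMem (by simp [Ne.symm hdc]), Finset.card_singleton]
    -- S is one of a, c, d; in each case t = {S, u, S ^^^ u}
    have key : ∃ u ∈ t, u ≠ S ∧ S ^^^ u ∈ t ∧ S ^^^ u ≠ u ∧ S ^^^ u ≠ S ∧
        t = {S, u, S ^^^ u} := by
      have hSmem' : S ∈ ({a, c, d} : Finset ℕ) := hteq ▸ hSt
      simp only [Finset.mem_insert, Finset.mem_singleton] at hSmem'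
      have base : ∀ u v : ℕ, S ^^^ u = v → u ∈ t → v ∈ t → u ≠ v → u ≠ S → v ≠ S →
          t = {S, u, v} → ∃ u ∈ t, u ≠ S ∧ S ^^^ u ∈ t ∧ S ^^^ u ≠ u ∧ S ^^^ u ≠ S ∧
            t = {S, u, S ^^^ u} := by
        intro u v he hu hv huv huS hvS hteq'
        exact ⟨u, hu, huS, he ▸ hv, he ▸ huv.symm, he ▸ hvS, he ▸ hteq'⟩
      rcases hSmem' with rfl | rfl | rfl
      · -- S = a : S ^^^ c = d
        exact base c d rfl hct hd hdc.symm (Ne.symm hac) hda hteq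
      · -- S = c : S ^^^ a = d
        refine base a d ?_ hat hd hda.symm hac hdc ?_
        · rw [Nat.xor_comm]
        · rw [hteq]
          ext x; simp only [Finset.mem_insert, Finset.mem_singleton]; tauto
      · -- S = d = a ^^^ c : S ^^^ a = c
        refine base a c ?_ hat hct hac hda.symm hdc.symm ?_
        · rw [hdd, Nat.xor_comm a c, xor_cancel_right]
        · rw [hteq]
          ext x; simp only [Finset.mem_insert, Finset.mem_singleton]; tauto
    obtain ⟨u, hu, huS, hvu_mem, hvu, hvS, hteq'⟩ := key
    set v := S ^^^ u with hv
    -- take b = min u v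
    rcases Nat.lt_or_ge u v with hlt | hge
    · refine ⟨u, ?_, ?_⟩
      · rw [hX, Finset.mem_filter, hA, Finset.mem_erase]
        refine ⟨⟨huS, hsub hu⟩, ?_⟩
        rw [Nat.xor_comm]; exact hlt
      · rw [hteq', Nat.xor_comm u S]
    · have hlt : v < u := by omega
      refine ⟨v, ?_, ?_⟩
      · rw [hX, Finset.mem_filter, hA, Finset.mem_erase]
        refine ⟨⟨hvS, hsub hvu_mem⟩, ?_⟩
        have : v ^^^ S = u := by
          rw [hv, Nat.xor_comm S u, xor_cancel_right]
        omega
      · have hvu' : v ^^^ S = u := by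
          rw [hv, Nat.xor_comm S u, xor_cancel_right]
        rw [hteq', hvu']
        ext x; simp only [Finset.mem_insert, Finset.mem_singleton]; tauto
end

section
/- Let N ≥ 5 and let S satisfy 8 < S < 16, with s = S − 8. The number of XOR-triples {a, b, c} contained in {1, …, 2^{N−1} − 1} \ {S} none of whose elements is congruent to 0 or to s modulo 8 equals 4^{N−3} (that is, 4 · 4^{N−4}). -/
private lemma xor_mod8 (a b : ℕ) : (a ^^^ b) % 8 = (a % 8) ^^^ (b % 8) := by
  apply Nat.eq_of_testBit_eq
  intro i
  have h8 : (8:ℕ) = 2^3 := rfl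
  rw [h8]
  simp only [Nat.testBit_mod_two_pow, Nat.testBit_xor]
  cases Nat.decLt i 3 <;> simp_all

private lemma xor_div8 (a b : ℕ) : (a ^^^ b) / 8 = (a / 8) ^^^ (b / 8) := by
  have h : ∀ x : ℕ, x / 8 = x >>> 3 := fun x => (Nat.shiftRight_eq_div_pow x 3).symm
  rw [h, h, h]
  apply Nat.eq_of_testBit_eq
  intro i
  simp [Nat.testBit_shiftRight, Nat.testBit_xor]

private lemma xc1 (a b : ℕ) : a ^^^ (a ^^^ b) = b := by
  rw [← Nat.xor_assoc, Nat.xor_self, Nat.zero_xor]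

private lemma xc2 (a b : ℕ) : (a ^^^ b) ^^^ a = b := by
  rw [Nat.xor_comm]; exact xc1 a b

private lemma xc3 (a b : ℕ) : b ^^^ (a ^^^ b) = a := by
  rw [Nat.xor_comm a b]; exact xc1 b a

private lemma xc4 (a b : ℕ) : (a ^^^ b) ^^^ b = a := by
  rw [Nat.xor_comm]; exact xc3 a b

private lemma xor_ne_left {x y : ℕ} (hy : 0 < y) : x ^^^ y ≠ x := by
  intro h
  have : y = 0 := by rw [← xc1 x y, h, Nat.xor_self]
  omega

private lemma xor_ne_right {x y : ℕ} (hx : 0 < x) : x ^^^ y ≠ y := by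
  intro h
  have : x = 0 := by rw [← xc4 x y, h, Nat.xor_self]
  omega

private lemma card3 {x y z : ℕ} (hxy : x ≠ y) (hxz : x ≠ z) (hyz : y ≠ z) :
    ({x, y, z} : Finset ℕ).card = 3 := by
  rw [Finset.card_insert_of_notMem (by simp [hxy, hxz]),
    Finset.card_insert_of_notMem (by simp [hyz]), Finset.card_singleton]

private lemma rp_card (s : ℕ) (h1 : 1 ≤ s) (h7 : s ≤ 7) :
    (((Finset.range 8) ×ˢ (Finset.range 8)).filter
      (fun r => (r.1 ≠ 0 ∧ r.1 ≠ s) ∧ (r.2 ≠ 0 ∧ r.2 ≠ s) ∧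
        (r.1 ^^^ r.2) ≠ 0 ∧ (r.1 ^^^ r.2) ≠ s)).card = 24 := by
  interval_cases s <;> decide

theorem sand_mandala_hidden_triples (N S : ℕ) (hN : 5 ≤ N) (h8 : 8 < S) (h16 : S < 16) :
    let s := S - 8
    (((Finset.Icc 1 (2 ^ (N - 1) - 1)).erase S).powerset.filter
        (fun t => IsXorTriple t ∧ ∀ x ∈ t, ¬(x % 8 = 0 ∨ x % 8 = s))).card
      = 4 ^ (N - 3) := by
  intro s
  have hsdef : s = S - 8 := rfl
  clear_value s
  have hs1 : 1 ≤ s := by omega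
  have hs7 : s ≤ 7 := by omega
  have hSs : S = 8 + s := by omega
  set B := (Finset.Icc 1 (2 ^ (N - 1) - 1)).erase S with hB
  set A := B.filter (fun x => ¬(x % 8 = 0 ∨ x % 8 = s)) with hA
  set T := B.powerset.filter
      (fun t => IsXorTriple t ∧ ∀ x ∈ t, ¬(x % 8 = 0 ∨ x % 8 = s)) with hT
  show T.card = 4 ^ (N - 3)
  have hpow : 2 ^ (N - 4) * 8 = 2 ^ (N - 1) := by
    rw [show (8:ℕ) = 2^3 from rfl, ← pow_add]
    congr 1
    omega
  -- characterization of membership in A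
  have memA : ∀ x : ℕ, x ∈ A ↔ (x % 8 ≠ 0 ∧ x % 8 ≠ s ∧ x / 8 < 2 ^ (N - 4)) := by
    intro x
    rw [hA, Finset.mem_filter, hB, Finset.mem_erase, Finset.mem_Icc]
    constructor
    · rintro ⟨⟨hne, h1, h2⟩, hcond⟩
      push_neg at hcond
      refine ⟨hcond.1, hcond.2, ?_⟩
      rw [Nat.div_lt_iff_lt_mul (by norm_num : (0:ℕ) < 8), hpow]
      have hp : 0 < 2 ^ (N - 1) := Nat.pow_pos (by norm_num)
      omega
    · rintro ⟨h0, hs, hq⟩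
      have hxlt : x < 2 ^ (N - 1) := by
        rw [← hpow]
        exact (Nat.div_lt_iff_lt_mul (by norm_num : (0:ℕ) < 8)).mp hq
      have hp : 0 < 2 ^ (N - 1) := Nat.pow_pos (by norm_num)
      refine ⟨⟨?_, ?_, ?_⟩, ?_⟩
      · omega
      · omega
      · omega
      · push_neg
        exact ⟨h0, hs⟩
  have posA : ∀ x, x ∈ A → 0 < x := fun x hx => by
    have := (memA x).mp hx; omega
  -- closure property of triples in T
  have closure : ∀ t ∈ T, t ⊆ A ∧ ∀ x ∈ t, ∀ y ∈ t, x ≠ y → x ^^^ y ∈ t := by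
    intro t ht
    rw [hT, Finset.mem_filter, Finset.mem_powerset] at ht
    obtain ⟨hsub, ⟨hcard, hpos, a, ha, b, hb, hab, hc⟩, hres⟩ := ht
    have hsubA : t ⊆ A := fun x hx => Finset.mem_filter.mpr ⟨hsub hx, hres x hx⟩
    refine ⟨hsubA, ?_⟩
    have h1 : a ^^^ b ≠ a := xor_ne_left (hpos b hb)
    have h2 : a ^^^ b ≠ b := xor_ne_right (hpos a ha)
    have hteq : ({a, b, a ^^^ b} : Finset ℕ) = t := by
      apply Finset.eq_of_subset_of_card_le
      · intro z hz
        simp only [Finset.mem_insert, Finset.mem_singleton] at hz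
        rcases hz with rfl | rfl | rfl <;> assumption
      · rw [hcard, card3 hab (Ne.symm h1) (Ne.symm h2)]
    intro x hx y hy hxy
    rw [← hteq] at hx hy ⊢
    simp only [Finset.mem_insert, Finset.mem_singleton] at hx hy ⊢
    rcases hx with rfl | rfl | rfl <;> rcases hy with rfl | rfl | rfl
    · exact absurd rfl hxy
    · exact Or.inr (Or.inr rfl)
    · exact Or.inr (Or.inl (xc1 _ _))
    · exact Or.inr (Or.inr (Nat.xor_comm _ _))
    · exact absurd rfl hxy
    · exact Or.inl (xc3 _ _)
    · exact Or.inr (Or.inl (xc2 _ _))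
    · exact Or.inl (xc4 _ _)
    · exact absurd rfl hxy
  -- the set of ordered pairs
  set P := (A ×ˢ A).filter (fun p => p.1 ≠ p.2 ∧ p.1 ^^^ p.2 ∈ A) with hP
  -- the map from pairs to triples
  have hmap : ∀ p ∈ P, ({p.1, p.2, p.1 ^^^ p.2} : Finset ℕ) ∈ T := by
    intro p hp
    rw [hP, Finset.mem_filter, Finset.mem_product] at hp
    obtain ⟨⟨hp1, hp2⟩, hne, hp3⟩ := hp
    have d1 : p.1 ^^^ p.2 ≠ p.1 := xor_ne_left (posA _ hp2)
    have d2 : p.1 ^^^ p.2 ≠ p.2 := xor_ne_right (posA _ hp1)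
    have hAB : ∀ x, x ∈ A → x ∈ B := fun x hx => (Finset.mem_filter.mp hx).1
    have hresA : ∀ x, x ∈ A → ¬(x % 8 = 0 ∨ x % 8 = s) :=
      fun x hx => (Finset.mem_filter.mp hx).2
    rw [hT, Finset.mem_filter, Finset.mem_powerset]
    refine ⟨?_, ⟨?_, ?_, p.1, ?_, p.2, ?_, hne, ?_⟩, ?_⟩
    · intro z hz
      simp only [Finset.mem_insert, Finset.mem_singleton] at hz
      rcases hz with rfl | rfl | rfl
      exacts [hAB _ hp1, hAB _ hp2, hAB _ hp3]
    · exact card3 hne (Ne.symm d1) (Ne.symm d2)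
    · intro z hz
      simp only [Finset.mem_insert, Finset.mem_singleton] at hz
      rcases hz with rfl | rfl | rfl
      exacts [posA _ hp1, posA _ hp2, posA _ hp3]
    · simp
    · simp
    · simp
    · intro z hz
      simp only [Finset.mem_insert, Finset.mem_singleton] at hz
      rcases hz with rfl | rfl | rfl
      exacts [hresA _ hp1, hresA _ hp2, hresA _ hp3]
  -- fiber count
  have hfib : ∀ t ∈ T,
      (P.filter (fun p => ({p.1, p.2, p.1 ^^^ p.2} : Finset ℕ) = t)).card = 6 := by
    intro t ht
    obtain ⟨hsubA, hclose⟩ := closure t ht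
    have hcard3 : t.card = 3 := ((Finset.mem_filter.mp ht).2.1).1
    have hEq : P.filter (fun p => ({p.1, p.2, p.1 ^^^ p.2} : Finset ℕ) = t)
        = t.offDiag := by
      ext p
      rw [Finset.mem_filter, Finset.mem_offDiag, hP, Finset.mem_filter,
        Finset.mem_product]
      constructor
      · rintro ⟨⟨⟨hq1, hq2⟩, hne, hq3⟩, hft⟩
        refine ⟨?_, ?_, hne⟩
        · rw [← hft]; simp
        · rw [← hft]; simp
      · rintro ⟨hx, hy, hne⟩
        have hxorT := hclose _ hx _ hy hne
        refine ⟨⟨⟨hsubA hx, hsubA hy⟩, hne, hsubA hxorT⟩, ?_⟩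
        apply Finset.eq_of_subset_of_card_le
        · intro z hz
          simp only [Finset.mem_insert, Finset.mem_singleton] at hz
          rcases hz with rfl | rfl | rfl
          exacts [hx, hy, hxorT]
        · rw [hcard3,
            card3 hne (Ne.symm (xor_ne_left (posA _ (hsubA hy))))
              (Ne.symm (xor_ne_right (posA _ (hsubA hx))))]
    rw [hEq, Finset.offDiag_card, hcard3]
  -- double counting: P.card = T.card * 6
  have hPT : P.card = T.card * 6 := by
    rw [Finset.card_eq_sum_card_fiberwise hmap]
    rw [Finset.sum_congr rfl hfib, Finset.sum_const, smul_eq_mul]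
  -- bijection P ≅ Rp ×ˢ (range 2^(N-4) ×ˢ range 2^(N-4))
  set Rp := ((Finset.range 8) ×ˢ (Finset.range 8)).filter
      (fun r => (r.1 ≠ 0 ∧ r.1 ≠ s) ∧ (r.2 ≠ 0 ∧ r.2 ≠ s) ∧
        (r.1 ^^^ r.2) ≠ 0 ∧ (r.1 ^^^ r.2) ≠ s) with hRp
  set D := Rp ×ˢ ((Finset.range (2 ^ (N - 4))) ×ˢ (Finset.range (2 ^ (N - 4)))) with hD
  have hPD : P.card = D.card := by
    apply Finset.card_nbij'
      (i := fun p => ((p.1 % 8, p.2 % 8), (p.1 / 8, p.2 / 8)))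
      (j := fun q => (8 * q.2.1 + q.1.1, 8 * q.2.2 + q.1.2))
    · intro p hp
      rw [Finset.mem_coe] at hp ⊢
      rw [hP, Finset.mem_filter, Finset.mem_product] at hp
      obtain ⟨⟨hp1, hp2⟩, hne, hp3⟩ := hp
      have m1 := (memA _).mp hp1
      have m2 := (memA _).mp hp2
      have m3 := (memA _).mp hp3
      rw [xor_mod8, xor_div8] at m3
      rw [hD, Finset.mem_product, hRp, Finset.mem_filter, Finset.mem_product]
      refine ⟨⟨⟨?_, ?_⟩, ⟨m1.1, m1.2.1⟩, ⟨m2.1, m2.2.1⟩, m3.1, m3.2.1⟩, ?_⟩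
      · exact Finset.mem_range.mpr (Nat.mod_lt _ (by norm_num))
      · exact Finset.mem_range.mpr (Nat.mod_lt _ (by norm_num))
      · rw [Finset.mem_product]
        exact ⟨Finset.mem_range.mpr m1.2.2, Finset.mem_range.mpr m2.2.2⟩
    · intro q hq
      rw [Finset.mem_coe] at hq ⊢
      rw [hD, Finset.mem_product, hRp, Finset.mem_filter, Finset.mem_product] at hq
      obtain ⟨⟨⟨hr1, hr2⟩, ⟨hr10, hr1s⟩, ⟨hr20, hr2s⟩, hx0, hxs⟩, hqq⟩ := hq
      rw [Finset.mem_product, Finset.mem_range, Finset.mem_range] at hqq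
      rw [Finset.mem_range] at hr1 hr2
      obtain ⟨hq1, hq2⟩ := hqq
      have e1m : (8 * q.2.1 + q.1.1) % 8 = q.1.1 := by omega
      have e2m : (8 * q.2.2 + q.1.2) % 8 = q.1.2 := by omega
      have e1d : (8 * q.2.1 + q.1.1) / 8 = q.2.1 := by omega
      have e2d : (8 * q.2.2 + q.1.2) / 8 = q.2.2 := by omega
      rw [hP, Finset.mem_filter, Finset.mem_product]
      refine ⟨⟨?_, ?_⟩, ?_, ?_⟩
      · rw [memA, e1m, e1d]; exact ⟨hr10, hr1s, hq1⟩
      · rw [memA, e2m, e2d]; exact ⟨hr20, hr2s, hq2⟩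
      · intro h
        apply hx0
        have : q.1.1 = q.1.2 := by
          have := congrArg (· % 8) h
          simpa [e1m, e2m] using this
        rw [this, Nat.xor_self]
      · rw [memA, xor_mod8, xor_div8, e1m, e2m, e1d, e2d]
        exact ⟨hx0, hxs, Nat.xor_lt_two_pow hq1 hq2⟩
    · intro p hp
      have d1 := Nat.div_add_mod p.1 8
      have d2 := Nat.div_add_mod p.2 8
      exact Prod.ext (by simpa using d1) (by simpa using d2)
    · intro q hq
      rw [Finset.mem_coe] at hq
      rw [hD, Finset.mem_product, hRp, Finset.mem_filter, Finset.mem_product] at hq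
      obtain ⟨⟨⟨hr1, hr2⟩, -⟩, -⟩ := hq
      rw [Finset.mem_range] at hr1 hr2
      have e1m : (8 * q.2.1 + q.1.1) % 8 = q.1.1 := by omega
      have e2m : (8 * q.2.2 + q.1.2) % 8 = q.1.2 := by omega
      have e1d : (8 * q.2.1 + q.1.1) / 8 = q.2.1 := by omega
      have e2d : (8 * q.2.2 + q.1.2) / 8 = q.2.2 := by omega
      simp only [e1m, e2m, e1d, e2d]
  have hDcard : D.card = 24 * (2 ^ (N - 4) * 2 ^ (N - 4)) := by
    rw [hD, Finset.card_product, Finset.card_product, Finset.card_range,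
      hRp, rp_card s hs1 hs7]
  -- final arithmetic
  have e1 : (4:ℕ) ^ (N - 3) = 4 * 4 ^ (N - 4) := by
    rw [← pow_succ']
    congr 1
    omega
  have e2 : (4:ℕ) ^ (N - 4) = 2 ^ (N - 4) * 2 ^ (N - 4) := by
    rw [← mul_pow]
    norm_num
  have := hPT
  rw [hPD, hDcard] at this
  omega
end
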